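/- Let f_1(z) = z (so f_0(z)=z, f_1(z)=z, f_{n+2}=f_{n+1}f_n+c) and let c be a real number with c < −2. Then for every purely imaginary number ix (x ∈ ℝ), the sequence (f_n(ix)) is unbounded; i.e., the imaginary axis does not meet K_c. Moreover −1 ∈ K_c and the positive real fixed point z₀ = (1+√(1−4c))/2 is in K_c, so K_c is disconnected. -/

import Mathlib

theorem stmt12 (c : ℝ) (hc : c < -2)
    (fs : ℕ → ℂ → ℂ)
    (h0 : ∀ z, fs 0 z = z) (h1 : ∀ z, fs 1 z = z)
    (hrec : ∀ n z, fs (n + 2) z = fs (n + 1) z * fs n z + (c : ℂ)) :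
    (∀ x : ℝ, ¬ BddAbove (Set.range fun n => ‖fs n (x * Complex.I)‖)) ∧
    (-1 : ℂ) ∈ {z : ℂ | BddAbove (Set.range fun n => ‖fs n z‖)} ∧
    (((1 + Real.sqrt (1 - 4 * c)) / 2 : ℝ) : ℂ) ∈
      {z : ℂ | BddAbove (Set.range fun n => ‖fs n z‖)} ∧
    ¬ IsPreconnected {z : ℂ | BddAbove (Set.range fun n => ‖fs n z‖)} := by
  have hc0 : c < 0 := by linarith
  have habsc : ‖(c : ℂ)‖ = -c := by
    rw [Complex.norm_real, Real.norm_eq_abs, abs_of_neg hc0]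
  -- Part 1 : imaginary axis escapes
  have himag : ∀ x : ℝ, ¬ BddAbove (Set.range fun n => ‖fs n (x * Complex.I)‖) := by
    intro x hbdd
    obtain ⟨M, hM⟩ := hbdd
    have hM' : ∀ n, ‖fs n ((x : ℂ) * Complex.I)‖ ≤ M := by
      intro n; exact hM ⟨n, rfl⟩
    set z : ℂ := (x : ℂ) * Complex.I with hzdef
    set a : ℕ → ℝ := fun n => ‖fs n z‖ with hadef
    have ha_nonneg : ∀ n, 0 ≤ a n := fun n => norm_nonneg _
    have key : ∀ n, a (n + 1) * a n + c ≤ a (n + 2) := by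
      intro n
      have h := norm_sub_norm_le (fs (n + 1) z * fs n z) (-(c : ℂ))
      simp only [sub_neg_eq_add, norm_neg, norm_mul, habsc] at h
      simp only [hadef]
      rw [hrec n z]
      linarith
    have hzz : z * z = ((c - x ^ 2 : ℝ) : ℂ) - (c : ℂ) := by
      rw [hzdef]
      push_cast
      rw [mul_mul_mul_comm, Complex.I_mul_I]
      ring
    have hf2 : fs 2 z = ((c - x ^ 2 : ℝ) : ℂ) := by
      rw [hrec 0 z, h1, h0, hzz]; ring
    have ha2 : -c ≤ a 2 := by
      have : a 2 = |c - x ^ 2| := by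
        simp only [hadef, hf2, Complex.norm_real, Real.norm_eq_abs]
      rw [this, abs_of_neg (by nlinarith [sq_nonneg x])]
      nlinarith [sq_nonneg x]
    have hre3 : (fs 3 z).re = c := by
      have : fs 3 z = ((c - x ^ 2 : ℝ) : ℂ) * ((x : ℂ) * Complex.I) + (c : ℂ) := by
        rw [hrec 1 z, h1, hf2, hzdef]
      rw [this]
      simp [Complex.mul_re, sq]
    have ha3 : -c ≤ a 3 := by
      have h := Complex.abs_re_le_norm (fs 3 z)
      rw [hre3, abs_of_neg hc0] at h
      exact h
    have hK2 : 2 < -c := by linarith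
    have haK : ∀ n, -c ≤ a (n + 2) ∧ -c ≤ a (n + 3) := by
      intro n
      induction n with
      | zero => exact ⟨ha2, ha3⟩
      | succ n ih =>
        obtain ⟨p, q⟩ := ih
        refine ⟨q, ?_⟩
        have hk := key (n + 2)
        nlinarith
    set δ : ℝ := (-c) * (-c - 2) with hδdef
    have hδ : 0 < δ := by
      rw [hδdef]; nlinarith
    have hgrow : ∀ n, -c + n * δ ≤ a (n + 3) := by
      intro n
      induction n with
      | zero => simpa using ha3
      | succ n ih =>
        have hk := key (n + 2)
        simp only [show n + 2 + 1 = n + 3 from rfl, show n + 2 + 2 = n + 4 from rfl] at hk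
        have hp := (haK n).1
        have hprod : (-c + n * δ) * (-c) ≤ a (n + 3) * a (n + 2) := by
          have hn0 : (0 : ℝ) ≤ -c + n * δ := by positivity
          exact mul_le_mul ih hp (by linarith) (ha_nonneg _)
        have hnn : (0 : ℝ) ≤ (n : ℝ) * ((-c) * (-c - 2)) * (-c - 1) :=
          mul_nonneg (mul_nonneg (Nat.cast_nonneg n) (by nlinarith)) (by linarith)
        have harith : -c + ((n : ℝ) + 1) * δ ≤ (-c + n * δ) * (-c) + c := by
          rw [hδdef]
          nlinarith [hnn]
        push_cast
        show -c + ((n : ℝ) + 1) * δ ≤ a (n + 4)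
        linarith
    obtain ⟨n, hn⟩ := exists_nat_gt ((M - (-c)) / δ)
    have hn2 : M < -c + n * δ := by
      rw [div_lt_iff₀ hδ] at hn
      linarith
    have := hM' (n + 3)
    have hg := hgrow n
    simp only [hadef] at hg
    linarith
  have hm1 : (-1 : ℂ) ∈ {z : ℂ | BddAbove (Set.range fun n => ‖fs n z‖)} := by
    have hpat : ∀ n, (fs n (-1) = -1 ∧ fs (n + 1) (-1) = -1) ∨
        (fs n (-1) = -1 ∧ fs (n + 1) (-1) = 1 + c) ∨
        (fs n (-1) = 1 + c ∧ fs (n + 1) (-1) = -1) := by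
      intro n
      induction n with
      | zero => exact Or.inl ⟨h0 _, h1 _⟩
      | succ n ih =>
        rcases ih with ⟨p, q⟩ | ⟨p, q⟩ | ⟨p, q⟩
        · refine Or.inr (Or.inl ⟨q, ?_⟩); rw [hrec, p, q]; ring
        · refine Or.inr (Or.inr ⟨q, ?_⟩); rw [hrec, p, q]; ring
        · refine Or.inl ⟨q, ?_⟩; rw [hrec, p, q]; ring
    refine ⟨1 - c, ?_⟩
    rintro y ⟨n, rfl⟩
    have habs1c : ‖1 + (c : ℂ)‖ ≤ 1 - c := by
      have h' : (1 + (c : ℂ)) = ((1 + c : ℝ) : ℂ) := by push_cast; ring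
      rw [h', Complex.norm_real, Real.norm_eq_abs, abs_of_neg (by linarith)]
      linarith
    rcases hpat n with ⟨p, _⟩ | ⟨p, _⟩ | ⟨p, _⟩ <;> simp only [p] <;>
      simp [habs1c] <;> linarith
  have hs2 : (Real.sqrt (1 - 4 * c)) ^ 2 = 1 - 4 * c := Real.sq_sqrt (by linarith)
  have hs0 : 0 ≤ Real.sqrt (1 - 4 * c) := Real.sqrt_nonneg _
  set w : ℝ := (1 + Real.sqrt (1 - 4 * c)) / 2 with hwdef
  have hw0 : 0 < w := by rw [hwdef]; linarith
  have hfixR : w * w + c = w := by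
    rw [hwdef]; nlinarith [hs2]
  have hfix : (w : ℂ) * (w : ℂ) + (c : ℂ) = (w : ℂ) := by
    exact_mod_cast hfixR
  have hwpat : ∀ n, fs n (w : ℂ) = (w : ℂ) ∧ fs (n + 1) (w : ℂ) = (w : ℂ) := by
    intro n
    induction n with
    | zero => exact ⟨h0 _, h1 _⟩
    | succ n ih => exact ⟨ih.2, by rw [hrec, ih.1, ih.2, hfix]⟩
  have hwmem : ((w : ℝ) : ℂ) ∈ {z : ℂ | BddAbove (Set.range fun n => ‖fs n z‖)} := by
    refine ⟨w, ?_⟩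
    rintro y ⟨n, rfl⟩
    simp only [(hwpat n).1, Complex.norm_real, Real.norm_eq_abs]
    exact le_of_eq (abs_of_nonneg hw0.le)
  refine ⟨himag, hm1, hwmem, ?_⟩
  -- Part 4 : not preconnected
  intro hpre
  have hcover : {z : ℂ | BddAbove (Set.range fun n => ‖fs n z‖)} ⊆
      {z : ℂ | z.re < 0} ∪ {z : ℂ | 0 < z.re} := by
    intro z hz
    rcases lt_trichotomy z.re 0 with h | h | h
    · exact Or.inl h
    · exfalso
      have hzeq : z = (z.im : ℂ) * Complex.I := by
        apply Complex.ext <;> simp [h]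
      rw [hzeq] at hz
      exact himag z.im hz
    · exact Or.inr h
  obtain ⟨p, -, hp1, hp2⟩ := hpre {z : ℂ | z.re < 0} {z : ℂ | 0 < z.re}
    (isOpen_lt Complex.continuous_re continuous_const)
    (isOpen_lt continuous_const Complex.continuous_re)
    hcover ⟨-1, hm1, by norm_num⟩ ⟨(w : ℂ), hwmem, by simpa using hw0⟩
  simp only [Set.mem_setOf_eq] at hp1 hp2
  linarith
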